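/- The graph Γ₇ has exactly two graph automorphisms: the identity, and the involution which fixes v and swaps aᵢ with bᵢ for i = 1, 2, 3. -/
import Mathlib


/-- The vertices of the graph `Γ₇`. -/
inductive V7 : Type
  | v | a1 | a2 | a3 | b1 | b2 | b3
  deriving DecidableEq

open V7

/-- The graph `Γ₇`: the hexagonal cycle `a₁a₂a₃b₁b₂b₃a₁`, the chords `a₂b₂` and `a₃b₃`,
and the four edges `va₁`, `vb₁`, `va₂`, `vb₂`. -/
def Gamma7 : SimpleGraph V7 :=
  SimpleGraph.fromEdgeSet
    {s(a1, a2), s(a2, a3), s(a3, b1), s(b1, b2), s(b2, b3), s(b3, a1),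
     s(a2, b2), s(a3, b3),
     s(v, a1), s(v, b1), s(v, a2), s(v, b2)}

/-- The involution of the vertex set of `Γ₇` which fixes `v` and swaps `aᵢ` with `bᵢ`
for `i = 1, 2, 3`. -/
def sigma7 : V7 → V7
  | v => v
  | a1 => b1
  | a2 => b2
  | a3 => b3
  | b1 => a1
  | b2 => a2
  | b3 => a3

instance : Fintype V7 :=
  ⟨⟨{v, a1, a2, a3, b1, b2, b3}, by decide⟩, fun x => by cases x <;> decide⟩

/-- A Boolean adjacency function for `Γ₇`. -/
def adj7 : V7 → V7 → Bool
  | a1, a2 | a2, a1 => true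
  | a2, a3 | a3, a2 => true
  | a3, b1 | b1, a3 => true
  | b1, b2 | b2, b1 => true
  | b2, b3 | b3, b2 => true
  | b3, a1 | a1, b3 => true
  | a2, b2 | b2, a2 => true
  | a3, b3 | b3, a3 => true
  | v, a1 | a1, v => true
  | v, b1 | b1, v => true
  | v, a2 | a2, v => true
  | v, b2 | b2, v => true
  | _, _ => false

lemma adj_iff (x y : V7) : Gamma7.Adj x y ↔ adj7 x y = true := by
  have h : ∀ x y : V7,
      ((s(x,y) = s(a1, a2) ∨ s(x,y) = s(a2, a3) ∨ s(x,y) = s(a3, b1) ∨ s(x,y) = s(b1, b2) ∨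
        s(x,y) = s(b2, b3) ∨ s(x,y) = s(b3, a1) ∨ s(x,y) = s(a2, b2) ∨ s(x,y) = s(a3, b3) ∨
        s(x,y) = s(v, a1) ∨ s(x,y) = s(v, b1) ∨ s(x,y) = s(v, a2) ∨ s(x,y) = s(v, b2)) ∧ x ≠ y)
      ↔ adj7 x y = true := by decide
  rw [← h]
  rw [Gamma7, SimpleGraph.fromEdgeSet_adj]
  simp only [Set.mem_insert_iff, Set.mem_singleton_iff]

set_option synthInstance.maxHeartbeats 1000000 in
set_option synthInstance.maxSize 10000 in
set_option maxHeartbeats 2000000 in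
lemma key7 : ∀ q0 q1 : V7, (q0 ≠ q1 ∧ adj7 q0 q1 = true) →
    ∀ q2 : V7, (q2 ≠ q0 ∧ q2 ≠ q1 ∧ adj7 q0 q2 = true ∧ adj7 q1 q2 = true) →
    ∀ q3 : V7, (q3 ≠ q0 ∧ q3 ≠ q1 ∧ q3 ≠ q2 ∧ adj7 q0 q3 = false ∧ adj7 q1 q3 = false ∧
      adj7 q2 q3 = true) →
    ∀ q4 : V7, (q4 ≠ q0 ∧ q4 ≠ q1 ∧ q4 ≠ q2 ∧ q4 ≠ q3 ∧ adj7 q0 q4 = true ∧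
      adj7 q1 q4 = false ∧ adj7 q2 q4 = false ∧ adj7 q3 q4 = true) →
    ∀ q5 : V7, (q5 ≠ q0 ∧ q5 ≠ q1 ∧ q5 ≠ q2 ∧ q5 ≠ q3 ∧ q5 ≠ q4 ∧ adj7 q0 q5 = true ∧
      adj7 q1 q5 = false ∧ adj7 q2 q5 = true ∧ adj7 q3 q5 = false ∧ adj7 q4 q5 = true) →
    ∀ q6 : V7, (q6 ≠ q0 ∧ q6 ≠ q1 ∧ q6 ≠ q2 ∧ q6 ≠ q3 ∧ q6 ≠ q4 ∧ q6 ≠ q5 ∧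
      adj7 q0 q6 = false ∧ adj7 q1 q6 = true ∧ adj7 q2 q6 = false ∧ adj7 q3 q6 = true ∧
      adj7 q4 q6 = false ∧ adj7 q5 q6 = true) →
    (q0 = v ∧ q1 = a1 ∧ q2 = a2 ∧ q3 = a3 ∧ q4 = b1 ∧ q5 = b2 ∧ q6 = b3) ∨
    (q0 = v ∧ q1 = b1 ∧ q2 = b2 ∧ q3 = b3 ∧ q4 = a1 ∧ q5 = a2 ∧ q6 = a3) := by decide

lemma sigma7_invol : Function.Involutive sigma7 := by
  intro x; cases x <;> rfl

/-- The graph `Γ₇` has exactly two graph automorphisms: the identity, and the involution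
which fixes `v` and swaps `aᵢ` with `bᵢ` for `i = 1, 2, 3`. -/
theorem Gamma7_has_exactly_two_automorphisms :
    (∃ ψ : Gamma7 ≃g Gamma7, ⇑ψ = sigma7) ∧
    sigma7 ≠ id ∧
    (∀ φ : Gamma7 ≃g Gamma7, ⇑φ = id ∨ ⇑φ = sigma7) := by
  refine ⟨?_, ?_, ?_⟩
  · refine ⟨⟨sigma7_invol.toPerm, ?_⟩, rfl⟩
    intro a b
    show Gamma7.Adj (sigma7 a) (sigma7 b) ↔ Gamma7.Adj a b
    have h : ∀ a b : V7, adj7 (sigma7 a) (sigma7 b) = adj7 a b := by decide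
    rw [adj_iff, adj_iff, h]
  · intro h
    have := congrFun h a1
    exact absurd this (by decide)
  · intro φ
    have hb : ∀ x y : V7, adj7 (φ x) (φ y) = adj7 x y := by
      intro x y
      have h := φ.map_rel_iff (a := x) (b := y)
      rw [adj_iff, adj_iff] at h
      exact Bool.eq_iff_iff.mpr h
    have hinj : ∀ {x y : V7}, x ≠ y → φ x ≠ φ y := fun hxy h => hxy (φ.injective h)
    have := key7 (φ v) (φ a1) ⟨hinj (by decide), hb v a1⟩
      (φ a2) ⟨hinj (by decide), hinj (by decide), hb v a2, hb a1 a2⟩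
      (φ a3) ⟨hinj (by decide), hinj (by decide), hinj (by decide), hb v a3, hb a1 a3, hb a2 a3⟩
      (φ b1) ⟨hinj (by decide), hinj (by decide), hinj (by decide), hinj (by decide),
        hb v b1, hb a1 b1, hb a2 b1, hb a3 b1⟩
      (φ b2) ⟨hinj (by decide), hinj (by decide), hinj (by decide), hinj (by decide),
        hinj (by decide), hb v b2, hb a1 b2, hb a2 b2, hb a3 b2, hb b1 b2⟩
      (φ b3) ⟨hinj (by decide), hinj (by decide), hinj (by decide), hinj (by decide),
        hinj (by decide), hinj (by decide), hb v b3, hb a1 b3, hb a2 b3, hb a3 b3,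
        hb b1 b3, hb b2 b3⟩
    rcases this with ⟨h0, h1, h2, h3, h4, h5, h6⟩ | ⟨h0, h1, h2, h3, h4, h5, h6⟩
    · left
      funext x
      cases x <;> assumption
    · right
      funext x
      cases x <;> assumption
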